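/- Let q = 2^(2ℓ) with ℓ ≥ 1 and F_q = GaloisField 2 (2ℓ). Then the maximum size of an intersecting subset of SL(2,F_q) with respect to the induced action on 3-element subsets of ℙ¹(F_q) is exactly 3q. (Since the stabilizer of a 3-subset has order 6, this says the intersection density of PGL(2,q) ≅ SL(2,F_q) acting on 3-subsets is q/2.) -/

import Mathlib

open scoped Pointwise MatrixGroups

noncomputable section

/-- The projective line over `K`. -/
abbrev Proj (K : Type*) [Field K] := Projectivization K (Fin 2 → K)

variable {K : Type*} [Field K]

lemma GLmulVecLin_injective (g : GL (Fin 2) K) :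
    Function.Injective ((g : Matrix (Fin 2) (Fin 2) K).mulVecLin) := by
  intro u v huv
  have h := congrArg ((((g⁻¹ : GL (Fin 2) K) : Matrix (Fin 2) (Fin 2) K)).mulVecLin) huv
  simp only [Matrix.mulVecLin_apply, Matrix.mulVec_mulVec] at h
  rw [show ((g⁻¹ : GL (Fin 2) K) : Matrix (Fin 2) (Fin 2) K) * (g : Matrix (Fin 2) (Fin 2) K) = 1
    from g.inv_mul, Matrix.one_mulVec, Matrix.one_mulVec] at h
  exact h

lemma GLmulVec_ne_zero (g : GL (Fin 2) K) {v : Fin 2 → K} (hv : v ≠ 0) :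
    (g : Matrix (Fin 2) (Fin 2) K).mulVec v ≠ 0 := by
  intro h
  apply hv
  have : ((g : Matrix (Fin 2) (Fin 2) K)).mulVecLin v =
      ((g : Matrix (Fin 2) (Fin 2) K)).mulVecLin 0 := by
    simpa [Matrix.mulVecLin_apply] using h
  simpa using GLmulVecLin_injective g this

/-- The action of `GL(2,K)` on the projective line by matrix-vector multiplication on
representatives. -/
instance GLProjAction : MulAction (GL (Fin 2) K) (Proj K) where
  smul g x := Projectivization.map ((g : Matrix (Fin 2) (Fin 2) K).mulVecLin)
    (GLmulVecLin_injective g) x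
  one_smul x := by
    induction x using Projectivization.ind with
    | h v hv =>
      show Projectivization.map _ _ _ = _
      simp [Projectivization.map_mk]
  mul_smul g h x := by
    induction x using Projectivization.ind with
    | h v hv =>
      show Projectivization.map _ _ _ =
        Projectivization.map _ _ (Projectivization.map _ _ _)
      simp [Projectivization.map_mk, Matrix.mulVecLin_apply, Matrix.mulVec_mulVec,
        Units.val_mul]

lemma GL_smul_mk (g : GL (Fin 2) K) (v : Fin 2 → K) (hv : v ≠ 0) :
    g • Projectivization.mk K v hv =
      Projectivization.mk K ((g : Matrix (Fin 2) (Fin 2) K).mulVec v)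
        (GLmulVec_ne_zero g hv) := by
  show Projectivization.map _ _ _ = _
  simp [Projectivization.map_mk, Matrix.mulVecLin_apply]

/-- The action of `SL(2,K)` on the projective line. -/
instance SLProjAction : MulAction (Matrix.SpecialLinearGroup (Fin 2) K) (Proj K) :=
  MulAction.compHom _ (Matrix.SpecialLinearGroup.toGL)

end

noncomputable section
variable {K : Type*} [Field K]

lemma center_smul_eq (c : GL (Fin 2) K) (hc : c ∈ Subgroup.center (GL (Fin 2) K))
    (x : Proj K) : c • x = x := by
  have hcomm : ∀ t : Matrix.TransvectionStruct (Fin 2) K,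
      Commute t.toMatrix (c : Matrix (Fin 2) (Fin 2) K) := by
    intro t
    let u : GL (Fin 2) K := ⟨t.toMatrix, t.inv.toMatrix, t.mul_inv, t.inv_mul⟩
    have h := Subgroup.mem_center_iff.mp hc u
    have := congrArg Units.val h
    simpa [u, Commute, SemiconjBy] using this
  obtain ⟨r, hr⟩ := Matrix.mem_range_scalar_of_commute_transvectionStruct hcomm
  have hr0 : r ≠ 0 := by
    intro h0
    have hne : (![1, 0] : Fin 2 → K) ≠ 0 := by
      intro h
      have := congrFun h 0
      simp at this
    have := GLmulVec_ne_zero c hne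
    rw [← hr, h0] at this
    rw [show (0 : K) = (0 : K) from rfl] at this
    apply this
    funext i
    simp [Matrix.mulVec_diagonal]
  induction x using Projectivization.ind with
  | h v hv =>
    rw [GL_smul_mk]
    rw [Projectivization.mk_eq_mk_iff]
    refine ⟨Units.mk0 r hr0, ?_⟩
    rw [← hr]
    funext i
    simp [Matrix.mulVec_diagonal]

end

noncomputable section

/-- The projective general linear group `PGL(2,K) = GL(2,K)/Z(GL(2,K))`. -/
abbrev PGL2 (K : Type*) [Field K] : Type _ :=
  GL (Fin 2) K ⧸ Subgroup.center (GL (Fin 2) K)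

variable {K : Type*} [Field K]

/-- The action of `GL(2,K)` on the projective line descends to `PGL(2,K)`. -/
instance PGLProjSMul : SMul (PGL2 K) (Proj K) :=
  ⟨fun g x => Quotient.liftOn' g (fun a => a • x) (by
    intro a b hab
    rw [QuotientGroup.leftRel_apply] at hab
    show a • x = b • x
    have hb : b = a * (a⁻¹ * b) := by group
    rw [hb, mul_smul, center_smul_eq _ hab])⟩

instance PGLProjAction : MulAction (PGL2 K) (Proj K) where
  one_smul x := center_smul_eq 1 (Subgroup.one_mem _) x
  mul_smul g h x := by
    induction g using Quotient.inductionOn' with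
    | h a =>
      induction h using Quotient.inductionOn' with
      | h b => exact mul_smul a b x

lemma PGL2_smul_mk' (a : GL (Fin 2) K) (x : Proj K) :
    (QuotientGroup.mk a : PGL2 K) • x = a • x := rfl

/-- The natural homomorphism `SL(2,K) → PGL(2,K)`. -/
def SLtoPGL2 (K : Type*) [Field K] : Matrix.SpecialLinearGroup (Fin 2) K →* PGL2 K :=
  (QuotientGroup.mk' (Subgroup.center (GL (Fin 2) K))).comp Matrix.SpecialLinearGroup.toGL

/-- `PSL(2,K)`, realized as the image of `SL(2,K)` in `PGL(2,K)`. -/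
def PSL2 (K : Type*) [Field K] : Subgroup (PGL2 K) := (SLtoPGL2 K).range

/-- A subset `F` of a group `G` acting on the projective line over `K` is *intersecting for the
action on `k`-element subsets* if any two of its elements agree on some `k`-element subset of
the projective line. -/
def IntersectingOnSubsets (G : Type*) [Group G] (K : Type*) [Field K]
    [MulAction G (Proj K)] (k : ℕ) (F : Set G) : Prop :=
  ∀ g ∈ F, ∀ h ∈ F, ∃ S : Set (Proj K), S.ncard = k ∧ g • S = h • S

end

noncomputable section Helpers
open Matrix Projectivization

variable {K : Type*} [Field K]

/-- Abbreviation for `SL(2,K)`. -/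
local notation "SL2" => Matrix.SpecialLinearGroup (Fin 2) K

/-- The symmetric pairing whose vanishing detects linear dependence (char 2). -/
def sp (u v : Fin 2 → K) : K := u 0 * v 1 + u 1 * v 0

lemma sp_comm (u v : Fin 2 → K) : sp u v = sp v u := by unfold sp; ring

lemma sp_self [CharP K 2] (v : Fin 2 → K) : sp v v = 0 := by
  unfold sp
  linear_combination (v 0 * v 1) * (CharTwo.two_eq_zero (R := K))

lemma sp_smul_left (c : K) (u v : Fin 2 → K) : sp (c • u) v = c * sp u v := by
  simp [sp, Pi.smul_apply, smul_eq_mul]; ring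

lemma sp_smul_right (c : K) (u v : Fin 2 → K) : sp u (c • v) = c * sp u v := by
  simp [sp, Pi.smul_apply, smul_eq_mul]; ring

lemma sp_add_left (u u' v : Fin 2 → K) : sp (u + u') v = sp u v + sp u' v := by
  simp [sp, Pi.add_apply]; ring

lemma sp_add_right (u v v' : Fin 2 → K) : sp u (v + v') = sp u v + sp u v' := by
  simp [sp, Pi.add_apply]; ring

lemma vec_ne_zero_iff (v : Fin 2 → K) : v ≠ 0 ↔ v 0 ≠ 0 ∨ v 1 ≠ 0 := by
  constructor
  · intro h
    by_contra hc
    push_neg at hc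
    exact h (funext fun i => by fin_cases i <;> simp [hc.1, hc.2])
  · rintro (h | h) rfl <;> simp at h

/-- If `sp v w = 0` and `v ≠ 0` then `w` is a multiple of `v`. -/
lemma sp_parallel [CharP K 2] {v w : Fin 2 → K} (hv : v ≠ 0) (h : sp v w = 0) :
    ∃ c : K, w = c • v := by
  have htwo : (2 : K) = 0 := CharTwo.two_eq_zero
  rcases (vec_ne_zero_iff v).1 hv with h0 | h1
  · refine ⟨w 0 / v 0, funext fun i => ?_⟩
    fin_cases i
    · simp [Pi.smul_apply, smul_eq_mul]
      field_simp
    · simp [Fin.isValue, Fin.mk_one, Pi.smul_apply, smul_eq_mul]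
      field_simp
      unfold sp at h
      linear_combination h - (w 0 * v 1) * htwo
  · refine ⟨w 1 / v 1, funext fun i => ?_⟩
    fin_cases i
    · simp [Fin.isValue, Fin.mk_zero, Pi.smul_apply, smul_eq_mul]
      field_simp
      unfold sp at h
      linear_combination h - (w 1 * v 0) * htwo
    · simp [Pi.smul_apply, smul_eq_mul]
      field_simp

/-- Cramer-style decomposition identity. -/
lemma sp_dec [CharP K 2] (u v w : Fin 2 → K) :
    sp u v • w = sp w v • u + sp u w • v := by
  have htwo : (2 : K) = 0 := CharTwo.two_eq_zero
  funext i
  fin_cases i <;>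
    simp only [Fin.isValue, Fin.mk_zero, Fin.mk_one, Pi.add_apply, Pi.smul_apply,
      smul_eq_mul, sp] <;>
    [linear_combination -(u 0 * v 0 * w 1) * htwo;
     linear_combination -(u 1 * v 1 * w 0) * htwo]

lemma line_eq_iff [CharP K 2] {v w : Fin 2 → K} (hv : v ≠ 0) (hw : w ≠ 0) :
    Projectivization.mk K v hv = Projectivization.mk K w hw ↔ sp v w = 0 := by
  rw [Projectivization.mk_eq_mk_iff]
  constructor
  · rintro ⟨a, rfl⟩
    rw [Units.smul_def, sp_smul_left, sp_self, mul_zero]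
  · intro h
    obtain ⟨c, rfl⟩ := sp_parallel hv h
    have hc : c ≠ 0 := by rintro rfl; simp at hw
    exact ⟨(Units.mk0 c hc)⁻¹, by
      simp [Units.smul_def, smul_smul, inv_mul_cancel₀ hc]⟩

end Helpers
noncomputable section Helpers2
open Matrix Projectivization

variable {K : Type*} [Field K]

local notation "SL2" => Matrix.SpecialLinearGroup (Fin 2) K

lemma add_self_char2 [CharP K 2] (t : K) : t + t = 0 := by
  linear_combination t * (CharTwo.two_eq_zero (R := K))

lemma eq_of_add_eq_zero_char2 [CharP K 2] {a b : K} (h : a + b = 0) : a = b := by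
  linear_combination h - b * (CharTwo.two_eq_zero (R := K))

lemma sq_eq_sq_char2 [CharP K 2] {a b : K} (h : a^2 = b^2) : a = b := by
  have h2 : (a + b)^2 = 0 := by
    rw [CharTwo.add_sq, h]
    exact add_self_char2 _
  exact eq_of_add_eq_zero_char2 (pow_eq_zero_iff (two_ne_zero) |>.mp h2)

lemma mulVec_eq (M : Matrix (Fin 2) (Fin 2) K) (v : Fin 2 → K) (i : Fin 2) :
    M.mulVec v i = M i 0 * v 0 + M i 1 * v 1 := by
  simp [Matrix.mulVec, dotProduct, Fin.sum_univ_two]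

/-- A nonzero singular 2×2 matrix has a nonzero kernel vector. -/
lemma ker_vec [CharP K 2] (M : Matrix (Fin 2) (Fin 2) K) (hdet : M.det = 0) (hM : M ≠ 0) :
    ∃ v : Fin 2 → K, v ≠ 0 ∧ M.mulVec v = 0 := by
  have htwo : (2 : K) = 0 := CharTwo.two_eq_zero
  rw [Matrix.det_fin_two] at hdet
  by_cases h0 : M 0 0 = 0 ∧ M 0 1 = 0
  · refine ⟨![M 1 1, M 1 0], ?_, ?_⟩
    · intro hz
      apply hM
      have h1 : M 1 1 = 0 := by simpa using congrFun hz 0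
      have h2 : M 1 0 = 0 := by simpa using congrFun hz 1
      ext i j
      fin_cases i <;> fin_cases j <;> simp [h0.1, h0.2, h1, h2]
    · funext i
      fin_cases i <;> simp [mulVec_eq, h0.1, h0.2]
      linear_combination (M 1 0 * M 1 1) * htwo
  · refine ⟨![M 0 1, M 0 0], ?_, ?_⟩
    · intro hz
      apply h0
      constructor
      · simpa using congrFun hz 1
      · simpa using congrFun hz 0
    · funext i
      fin_cases i <;> simp [mulVec_eq]
      · linear_combination (M 0 0 * M 0 1) * htwo
      · linear_combination hdet + (M 0 1 * M 1 0) * htwo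

/-- A matrix killing two independent vectors is zero. -/
lemma agree_basis [CharP K 2] (N : Matrix (Fin 2) (Fin 2) K) {v w : Fin 2 → K}
    (hvw : sp v w ≠ 0)
    (hv : N.mulVec v = 0) (hw : N.mulVec w = 0) : N = 0 := by
  have htwo : (2 : K) = 0 := CharTwo.two_eq_zero
  ext i j
  have e1 : N i 0 * v 0 + N i 1 * v 1 = 0 := by rw [← mulVec_eq, hv]; rfl
  have e2 : N i 0 * w 0 + N i 1 * w 1 = 0 := by rw [← mulVec_eq, hw]; rfl
  have h1 : N i 0 * sp v w = 0 := by unfold sp; linear_combination w 1 * e1 - v 1 * e2 + (N i 0 * v 1 * w 0) * htwo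
  have h2 : N i 1 * sp v w = 0 := by unfold sp; linear_combination v 0 * e2 - w 0 * e1 + (N i 1 * v 1 * w 0) * htwo
  fin_cases j <;> simp
  · exact (mul_eq_zero.1 h1).resolve_right hvw
  · exact (mul_eq_zero.1 h2).resolve_right hvw

lemma SLmulVec_ne_zero (g : SL2) {v : Fin 2 → K} (hv : v ≠ 0) :
    (g : Matrix (Fin 2) (Fin 2) K).mulVec v ≠ 0 :=
  GLmulVec_ne_zero (Matrix.SpecialLinearGroup.toGL g) hv

lemma SL_smul_mk (g : SL2) (v : Fin 2 → K) (hv : v ≠ 0) :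
    g • Projectivization.mk K v hv =
      Projectivization.mk K ((g : Matrix (Fin 2) (Fin 2) K).mulVec v)
        (SLmulVec_ne_zero g hv) := by
  show (Matrix.SpecialLinearGroup.toGL g) • Projectivization.mk K v hv = _
  rw [GL_smul_mk]
  rfl

lemma fixed_eigvec [CharP K 2] (k : SL2) {p : Proj K} (hp : k • p = p) :
    ∃ c : K, (k : Matrix (Fin 2) (Fin 2) K).mulVec p.rep = c • p.rep := by
  have h1 : Projectivization.mk K ((k : Matrix (Fin 2) (Fin 2) K).mulVec p.rep)
      (SLmulVec_ne_zero k p.rep_nonzero) = Projectivization.mk K p.rep p.rep_nonzero := by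
    rw [← SL_smul_mk _ _ p.rep_nonzero, Projectivization.mk_rep]
    exact hp
  rw [line_eq_iff] at h1
  rw [sp_comm] at h1
  exact sp_parallel p.rep_nonzero h1

/-- An element of `SL(2,K)` fixing three distinct points of the projective line is trivial
(char 2). -/
lemma fix3 [CharP K 2] (k : SL2) {x y z : Proj K} (hxy : x ≠ y) (hxz : x ≠ z) (hyz : y ≠ z)
    (hx : k • x = x) (hy : k • y = y) (hz : k • z = z) : k = 1 := by
  obtain ⟨α, hα⟩ := fixed_eigvec k hx
  obtain ⟨β, hβ⟩ := fixed_eigvec k hy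
  obtain ⟨γ, hγ⟩ := fixed_eigvec k hz
  set M := (k : Matrix (Fin 2) (Fin 2) K) with hMdef
  set u := x.rep
  set v := y.rep
  set w := z.rep
  have hu0 : u ≠ 0 := x.rep_nonzero
  have hv0 : v ≠ 0 := y.rep_nonzero
  have hw0 : w ≠ 0 := z.rep_nonzero
  have hne : ∀ {p q : Proj K}, p ≠ q → sp p.rep q.rep ≠ 0 := by
    intro p q hpq hc
    exact hpq (by
      rw [← Projectivization.mk_rep p, ← Projectivization.mk_rep q]
      exact (line_eq_iff p.rep_nonzero q.rep_nonzero).2 hc)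
  have hsuv : sp u v ≠ 0 := hne hxy
  have ha : sp w v ≠ 0 := by rw [sp_comm]; exact hne hyz
  have hb : sp u w ≠ 0 := hne hxz
  -- apply M to the decomposition of w
  have hdec := sp_dec (K := K) u v w
  have happ : M.mulVec (sp u v • w) = (sp w v * α) • u + (sp u w * β) • v := by
    rw [hdec, Matrix.mulVec_add, Matrix.mulVec_smul, Matrix.mulVec_smul, hα, hβ,
      smul_smul, smul_smul]
  have happ2 : M.mulVec (sp u v • w) = (sp w v * γ) • u + (sp u w * γ) • v := by
    rw [Matrix.mulVec_smul, hγ, smul_comm, hdec, smul_add, smul_smul, smul_smul,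
      mul_comm γ (sp w v), mul_comm γ (sp u w)]
  have hcomb : (sp w v * α) • u + (sp u w * β) • v = (sp w v * γ) • u + (sp u w * γ) • v :=
    happ.symm.trans happ2
  -- pair with v to compare coefficients on u
  have hαγ : α = γ := by
    have := congrArg (fun t => sp t v) hcomb
    simp only [sp_add_left, sp_smul_left, sp_self, mul_zero, add_zero] at this
    have h0 : (sp w v * α) * sp u v = (sp w v * γ) * sp u v := this
    have := mul_right_cancel₀ hsuv h0
    exact mul_left_cancel₀ ha this
  have hβγ : β = γ := by
    have := congrArg (fun t => sp t u) hcomb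
    simp only [sp_add_left, sp_smul_left, sp_self, mul_zero, zero_add] at this
    have h0 : (sp u w * β) * sp v u = (sp u w * γ) * sp v u := this
    have hvu : sp v u ≠ 0 := by rw [sp_comm]; exact hsuv
    have := mul_right_cancel₀ hvu h0
    exact mul_left_cancel₀ hb this
  -- M agrees with the scalar α on the basis (u, v)
  have hN : M + α • (1 : Matrix (Fin 2) (Fin 2) K) = 0 := by
    apply agree_basis _ hsuv
    · rw [Matrix.add_mulVec, Matrix.smul_mulVec, Matrix.one_mulVec, hα]
      funext i
      simp [Pi.smul_apply, smul_eq_mul, add_self_char2]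
    · rw [Matrix.add_mulVec, Matrix.smul_mulVec, Matrix.one_mulVec, hβ, hβγ, ← hαγ]
      funext i
      simp [Pi.smul_apply, smul_eq_mul, add_self_char2]
  have hMα : M = α • (1 : Matrix (Fin 2) (Fin 2) K) := by
    ext i j
    have := congrFun (congrFun hN i) j
    simp only [Matrix.add_apply, Matrix.zero_apply] at this
    exact eq_of_add_eq_zero_char2 this
  have hdet2 : α ^ 2 = 1 := by
    have h1 : M.det = 1 := k.2
    rw [hMα, Matrix.det_smul, Matrix.det_one] at h1
    simpa [Fintype.card_fin] using h1
  have hα1 : α = 1 := sq_eq_sq_char2 (by rw [hdet2]; ring)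
  apply Matrix.SpecialLinearGroup.ext
  intro i j
  show M i j = _
  rw [hMα, hα1]
  simp


end Helpers2
noncomputable section Helpers3
open Matrix Projectivization

variable {K : Type*} [Field K]

local notation "SL2" => Matrix.SpecialLinearGroup (Fin 2) K

/-- Cayley–Hamilton for 2×2 matrices of determinant 1 in characteristic 2. -/
lemma CH2 [CharP K 2] (M : Matrix (Fin 2) (Fin 2) K) (hdet : M.det = 1) :
    M * M = M.trace • M + 1 := by
  have htwo : (2 : K) = 0 := CharTwo.two_eq_zero
  rw [Matrix.det_fin_two] at hdet
  ext i j
  rw [Matrix.mul_apply, Fin.sum_univ_two]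
  simp only [Matrix.add_apply, Matrix.smul_apply, Matrix.trace_fin_two, Matrix.one_apply,
    smul_eq_mul]
  fin_cases i <;> fin_cases j <;> simp
  · linear_combination -hdet - htwo
  · ring
  · ring
  · linear_combination -hdet - htwo

lemma trace_of_sq_eq_one [CharP K 2] (k : SL2) (h : k * k = 1) :
    (k : Matrix (Fin 2) (Fin 2) K).trace = 0 := by
  have hM : (k : Matrix (Fin 2) (Fin 2) K) * k = 1 := by
    rw [← Matrix.SpecialLinearGroup.coe_mul, h, Matrix.SpecialLinearGroup.coe_one]
  have hch := CH2 (k : Matrix (Fin 2) (Fin 2) K) k.2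
  rw [hM] at hch
  have h0 : (k : Matrix (Fin 2) (Fin 2) K).trace • (k : Matrix (Fin 2) (Fin 2) K) = 0 := by
    have := congrArg (fun X => X + (1 : Matrix (Fin 2) (Fin 2) K)) hch
    beta_reduce at this
    have h2 : (1 : Matrix (Fin 2) (Fin 2) K) + 1 = 0 := by
      ext i j
      simp [Matrix.one_apply, Matrix.add_apply]
      split <;> simp [add_self_char2]
    calc (k : Matrix (Fin 2) (Fin 2) K).trace • (k : Matrix (Fin 2) (Fin 2) K)
        = ((k : Matrix (Fin 2) (Fin 2) K).trace • (k : Matrix (Fin 2) (Fin 2) K) + 1) + 1 := by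
          rw [add_assoc, h2, add_zero]
      _ = 1 + 1 := by rw [← hch]
      _ = 0 := h2
  by_contra htr
  have : (k : Matrix (Fin 2) (Fin 2) K) = 0 := by
    have := congrArg (fun X => (Matrix.trace (k : Matrix (Fin 2) (Fin 2) K))⁻¹ • X) h0
    simpa [smul_smul, inv_mul_cancel₀ htr] using this
  have hd := k.2
  rw [this] at hd
  simp at hd

lemma trace_of_cube_eq_one [CharP K 2] (k : SL2) (h : k * k * k = 1) :
    (k : Matrix (Fin 2) (Fin 2) K).trace = 0 ∨ (k : Matrix (Fin 2) (Fin 2) K).trace = 1 := by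
  have htwo : (2 : K) = 0 := CharTwo.two_eq_zero
  set M := (k : Matrix (Fin 2) (Fin 2) K) with hMdef
  set t := M.trace with htdef
  by_cases ht1 : t = 1
  · right; exact ht1
  left
  have hM : M * M * M = 1 := by
    rw [← Matrix.SpecialLinearGroup.coe_mul, ← Matrix.SpecialLinearGroup.coe_mul, h,
      Matrix.SpecialLinearGroup.coe_one]
  have hch : M * M = t • M + 1 := CH2 M k.2
  have hM3 : (1 : Matrix (Fin 2) (Fin 2) K) = (t * t) • M + (t • (1 : Matrix (Fin 2) (Fin 2) K) + M) := by
    calc (1 : Matrix (Fin 2) (Fin 2) K) = M * M * M := hM.symm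
    _ = M * (t • M + 1) := by rw [mul_assoc, hch]
    _ = t • (M * M) + M := by rw [mul_add, mul_smul_comm, mul_one]
    _ = t • (t • M + 1) + M := by rw [hch]
    _ = (t * t) • M + (t • (1 : Matrix (Fin 2) (Fin 2) K) + M) := by
        rw [smul_add, smul_smul, add_assoc]
  have ht1' : t + 1 ≠ 0 := by
    intro hc
    exact ht1 (by linear_combination hc - htwo)
  have hsc : ∀ i j, ((t + 1) * (t + 1)) * M i j = (t + 1) * (1 : Matrix (Fin 2) (Fin 2) K) i j := by
    intro i j
    have hij := congrFun (congrFun hM3 i) j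
    simp only [Matrix.add_apply, Matrix.smul_apply, smul_eq_mul] at hij
    linear_combination -hij + (t * (M i j - (1 : Matrix (Fin 2) (Fin 2) K) i j)) * htwo
  have h01 : M 0 1 = 0 := by
    have hij := hsc 0 1
    simp [Matrix.one_apply] at hij
    rcases hij with hij | hij
    · exact absurd hij ht1'
    · exact hij
  have hdiag : ∀ i, (t + 1) * M i i = 1 := by
    intro i
    have hij := hsc i i
    simp [Matrix.one_apply] at hij
    have h2 : (t + 1) * ((t + 1) * M i i) = (t + 1) * 1 := by rw [← mul_assoc, hij, mul_one]
    exact mul_left_cancel₀ ht1' h2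
  have hd := k.2
  rw [Matrix.det_fin_two] at hd
  have hmm : M 0 0 * M 1 1 = 1 := by linear_combination hd + (M 1 0) * h01
  have h2 : (t + 1) * (t + 1) * (M 0 0 * M 1 1) = 1 := by
    linear_combination ((t + 1) * M 1 1) * hdiag 0 + hdiag 1
  have h3 : (t + 1) * (t + 1) = 1 := by linear_combination h2 - ((t + 1) * (t + 1)) * hmm
  have h4 : t + 1 = 1 := sq_eq_sq_char2 (by linear_combination h3)
  linear_combination h4

/-- A group element stabilizing a 3-element set squares or cubes to the identity. -/
lemma perm3 [CharP K 2] (k : SL2) (S : Set (Proj K)) (h3 : S.ncard = 3)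
    (hS : k • S = S) : k * k = 1 ∨ k * k * k = 1 := by
  obtain ⟨x, y, z, hxy, hxz, hyz, rfl⟩ := Set.ncard_eq_three.1 h3
  have hmem : ∀ p ∈ ({x, y, z} : Set (Proj K)), k • p ∈ ({x, y, z} : Set (Proj K)) := by
    intro p hp
    rw [← hS]
    exact Set.smul_mem_smul_set hp
  have hinj : ∀ {a b : Proj K}, k • a = k • b → a = b := fun h => smul_left_cancel_iff k |>.1 h
  have hfix : ∀ (m : SL2), m • x = x → m • y = y → m • z = z → m = 1 :=
    fun m => fix3 m hxy hxz hyz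
  have hx3 := hmem x (by simp)
  have hy3 := hmem y (by simp)
  have hz3 := hmem z (by simp)
  simp only [Set.mem_insert_iff, Set.mem_singleton_iff] at hx3 hy3 hz3
  rcases hx3 with hx | hx | hx <;> rcases hy3 with hy | hy | hy <;>
    rcases hz3 with hz | hz | hz
  -- 27 cases
  all_goals try (exact absurd (hinj (hx.trans hy.symm)) hxy)
  all_goals try (exact absurd (hinj (hx.trans hz.symm)) hxz)
  all_goals try (exact absurd (hinj (hy.trans hz.symm)) hyz)
  all_goals try (exact absurd (hinj (hy.trans hx.symm)) (Ne.symm hxy))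
  all_goals try (exact absurd (hinj (hz.trans hx.symm)) (Ne.symm hxz))
  all_goals try (exact absurd (hinj (hz.trans hy.symm)) (Ne.symm hyz))
  -- remaining: the 6 permutations
  · exact Or.inl (hfix _ (by rw [mul_smul, hx, hx]) (by rw [mul_smul, hy, hy])
      (by rw [mul_smul, hz, hz]))
  · exact Or.inl (hfix _ (by rw [mul_smul, hx, hx]) (by rw [mul_smul, hy, hz])
      (by rw [mul_smul, hz, hy]))
  · exact Or.inl (hfix _ (by rw [mul_smul, hx, hy]) (by rw [mul_smul, hy, hx])
      (by rw [mul_smul, hz, hz]))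
  · exact Or.inr (hfix _ (by rw [mul_smul, mul_smul, hx, hy, hz])
      (by rw [mul_smul, mul_smul, hy, hz, hx]) (by rw [mul_smul, mul_smul, hz, hx, hy]))
  · exact Or.inr (hfix _ (by rw [mul_smul, mul_smul, hx, hz, hy])
      (by rw [mul_smul, mul_smul, hy, hx, hz]) (by rw [mul_smul, mul_smul, hz, hy, hx]))
  · exact Or.inl (hfix _ (by rw [mul_smul, hx, hz]) (by rw [mul_smul, hy, hy])
      (by rw [mul_smul, hz, hx]))

end Helpers3
noncomputable section Helpers4
open Matrix Projectivization

variable {K : Type*} [Field K]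

local notation "SL2" => Matrix.SpecialLinearGroup (Fin 2) K

/-- trace in terms of the pairing: unconditional char-2 identity. -/
lemma trace_sp [CharP K 2] (X : Matrix (Fin 2) (Fin 2) K) (u v : Fin 2 → K) :
    X.trace * sp u v = sp (X.mulVec u) v + sp u (X.mulVec v) := by
  have htwo : (2 : K) = 0 := CharTwo.two_eq_zero
  simp only [sp, mulVec_eq, Matrix.trace_fin_two]
  linear_combination -(X 0 1 * u 1 * v 1 + X 1 0 * u 0 * v 0) * htwo

/-- Existence of an eigenvector for an eigenvalue satisfying `μ² + μ + 1 = 0`,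
for a matrix of determinant 1 and trace 1. -/
lemma eig_exists [CharP K 2] (M : Matrix (Fin 2) (Fin 2) K) (hdet : M.det = 1)
    (htr : M.trace = 1) (μ : K) (hμ : μ ^ 2 + μ + 1 = 0) :
    ∃ v : Fin 2 → K, v ≠ 0 ∧ M.mulVec v = μ • v := by
  have htwo : (2 : K) = 0 := CharTwo.two_eq_zero
  set N := M + μ • (1 : Matrix (Fin 2) (Fin 2) K) with hNdef
  have hdetN : N.det = 0 := by
    rw [hNdef]
    rw [Matrix.det_fin_two]
    simp only [Matrix.add_apply, Matrix.smul_apply, Matrix.one_apply, smul_eq_mul]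
    rw [Matrix.det_fin_two] at hdet
    rw [Matrix.trace_fin_two] at htr
    simp only [if_true, if_neg (by decide : ¬(0 : Fin 2) = 1), if_neg (by decide : ¬(1 : Fin 2) = 0),
      if_pos rfl, mul_one, mul_zero, add_zero]
    linear_combination hdet + μ * htr + hμ
  have hN0 : N ≠ 0 := by
    intro hc
    rw [Matrix.trace_fin_two] at htr
    have h1 : N 0 0 = 0 := by rw [hc]; rfl
    have h2 : N 1 1 = 0 := by rw [hc]; rfl
    rw [hNdef] at h1 h2
    simp only [Matrix.add_apply, Matrix.smul_apply, Matrix.one_apply_eq,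
      smul_eq_mul, mul_one] at h1 h2
    have : (1 : K) = 0 := by linear_combination -htr + h1 + h2 - μ * htwo
    exact one_ne_zero this
  obtain ⟨v, hv0, hv⟩ := ker_vec N hdetN hN0
  refine ⟨v, hv0, ?_⟩
  rw [hNdef, Matrix.add_mulVec, Matrix.smul_mulVec, Matrix.one_mulVec] at hv
  funext i
  have := congrFun hv i
  simp only [Pi.add_apply, Pi.smul_apply, smul_eq_mul, Pi.zero_apply] at this
  simp only [Pi.smul_apply, smul_eq_mul]
  linear_combination this - (v i * μ) * htwo

/-- ω³ = 1 from ω² + ω + 1 = 0. -/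
lemma omega_cube {ω : K} (hω : ω ^ 2 + ω + 1 = 0) : ω ^ 3 = 1 := by
  linear_combination (ω - 1) * hω

lemma omega_ne_zero {ω : K} (hω : ω ^ 2 + ω + 1 = 0) : ω ≠ 0 := by
  rintro rfl
  simp at hω
lemma omega_ne_one [CharP K 2] {ω : K} (hω : ω ^ 2 + ω + 1 = 0) : ω ≠ 1 := by
  have htwo : (2 : K) = 0 := CharTwo.two_eq_zero
  rintro rfl
  have : (1 : K) = 0 := by linear_combination hω - htwo
  exact one_ne_zero this
lemma omega_sq {ω : K} (hω : ω ^ 2 + ω + 1 = 0) : (ω ^ 2) ^ 2 + ω ^ 2 + 1 = 0 := by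
  have h3 := omega_cube hω
  linear_combination ω * hω + (ω - 1) * h3

/-- The key disjointness lemma: two trace-1 elements of `SL(2,K)` whose "ratio" has trace
0 or 1 must share an eigenline. -/
lemma K3 [CharP K 2] {ω : K} (hω : ω ^ 2 + ω + 1 = 0) (g h : SL2)
    {v₁ v₂ w₁ w₂ : Fin 2 → K}
    (hv₁ : (g : Matrix (Fin 2) (Fin 2) K).mulVec v₁ = ω • v₁)
    (hv₂ : (g : Matrix (Fin 2) (Fin 2) K).mulVec v₂ = ω ^ 2 • v₂)
    (hw₁ : (h : Matrix (Fin 2) (Fin 2) K).mulVec w₁ = ω • w₁)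
    (hw₂ : (h : Matrix (Fin 2) (Fin 2) K).mulVec w₂ = ω ^ 2 • w₂)
    (hv12 : sp v₁ v₂ ≠ 0) (hw12 : sp w₁ w₂ ≠ 0)
    (htr : ((g * h⁻¹ : SL2) : Matrix (Fin 2) (Fin 2) K).trace = 0 ∨
           ((g * h⁻¹ : SL2) : Matrix (Fin 2) (Fin 2) K).trace = 1) :
    sp v₁ w₁ = 0 ∨ sp v₂ w₂ = 0 ∨ sp v₂ w₁ = 0 ∨ sp v₁ w₂ = 0 := by
  have hω3 : ω ^ 3 = 1 := omega_cube hω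
  have hωne : ω ≠ 0 := omega_ne_zero hω
  set M := ((g * h⁻¹ : SL2) : Matrix (Fin 2) (Fin 2) K) with hMdef
  set G := (g : Matrix (Fin 2) (Fin 2) K)
  set H := (h : Matrix (Fin 2) (Fin 2) K)
  have hHinv : M = G * ((h⁻¹ : SL2) : Matrix (Fin 2) (Fin 2) K) :=
    Matrix.SpecialLinearGroup.coe_mul g h⁻¹
  -- h⁻¹ acts on w₁ by ω², on w₂ by ω
  have hinv_mul : ((h⁻¹ : SL2) : Matrix (Fin 2) (Fin 2) K) * H = 1 := by
    rw [← Matrix.SpecialLinearGroup.coe_mul, inv_mul_cancel, Matrix.SpecialLinearGroup.coe_one]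
  have hinvw : ∀ (w : Fin 2 → K) (μ : K), μ * μ ^ 2 = 1 → H.mulVec w = μ • w →
      ((h⁻¹ : SL2) : Matrix (Fin 2) (Fin 2) K).mulVec w = μ ^ 2 • w := by
    intro w μ hμ3 hw
    have h1 : ((h⁻¹ : SL2) : Matrix (Fin 2) (Fin 2) K).mulVec (H.mulVec w) = w := by
      rw [Matrix.mulVec_mulVec, hinv_mul, Matrix.one_mulVec]
    rw [hw, Matrix.mulVec_smul] at h1
    have h2 := congrArg (fun t => μ ^ 2 • t) h1
    simp only [smul_smul] at h2
    rw [show μ ^ 2 * μ = 1 by linear_combination hμ3, one_smul] at h2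
    exact h2
  have hiw₁ : ((h⁻¹ : SL2) : Matrix (Fin 2) (Fin 2) K).mulVec w₁ = ω ^ 2 • w₁ :=
    hinvw w₁ ω (by linear_combination hω3) hw₁
  have hiw₂ : ((h⁻¹ : SL2) : Matrix (Fin 2) (Fin 2) K).mulVec w₂ = (ω ^ 2) ^ 2 • w₂ :=
    hinvw w₂ (ω ^ 2) (by linear_combination (ω^3 + 1) * hω3) hw₂
  have hiw₂' : ((h⁻¹ : SL2) : Matrix (Fin 2) (Fin 2) K).mulVec w₂ = ω • w₂ := by
    rw [hiw₂]
    congr 1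
    linear_combination (ω) * hω3
  -- action of M on w₁, w₂
  have hMw₁ : M.mulVec w₁ = ω ^ 2 • (G.mulVec w₁) := by
    rw [hHinv, ← Matrix.mulVec_mulVec, hiw₁, Matrix.mulVec_smul]
  have hMw₂ : M.mulVec w₂ = ω • (G.mulVec w₂) := by
    rw [hHinv, ← Matrix.mulVec_mulVec, hiw₂', Matrix.mulVec_smul]
  -- decompositions
  set a := sp w₁ v₂
  set b := sp v₁ w₁
  set c := sp w₂ v₂
  set d := sp v₁ w₂
  set s := sp v₁ v₂
  have hdec₁ : s • w₁ = a • v₁ + b • v₂ := sp_dec v₁ v₂ w₁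
  have hdec₂ : s • w₂ = c • v₁ + d • v₂ := sp_dec v₁ v₂ w₂
  have hGw₁ : G.mulVec (s • w₁) = (a * ω) • v₁ + (b * ω ^ 2) • v₂ := by
    rw [Matrix.mulVec_smul, ← Matrix.mulVec_smul, hdec₁, Matrix.mulVec_add,
      Matrix.mulVec_smul, Matrix.mulVec_smul, hv₁, hv₂, smul_smul, smul_smul,
      mul_comm a ω, mul_comm b (ω ^ 2), mul_comm ω a, mul_comm (ω ^ 2) b]
  have hGw₂ : G.mulVec (s • w₂) = (c * ω) • v₁ + (d * ω ^ 2) • v₂ := by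
    rw [Matrix.mulVec_smul, ← Matrix.mulVec_smul, hdec₂, Matrix.mulVec_add,
      Matrix.mulVec_smul, Matrix.mulVec_smul, hv₁, hv₂, smul_smul, smul_smul,
      mul_comm c ω, mul_comm d (ω ^ 2), mul_comm ω c, mul_comm (ω ^ 2) d]
  -- pairing computations
  have hsp_comb : ∀ (p q r t : K),
      sp (p • v₁ + q • v₂) (r • v₁ + t • v₂) = (p * t + q * r) * s := by
    intro p q r t
    rw [sp_add_left, sp_add_right, sp_add_right, sp_smul_left, sp_smul_left, sp_smul_left,
      sp_smul_left, sp_smul_right, sp_smul_right, sp_smul_right, sp_smul_right,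
      sp_self, sp_comm v₂ v₁, sp_self]
    show p * (r * 0) + p * (t * s) + (q * (r * s) + q * (t * 0)) = (p * t + q * r) * s
    ring
  -- images of the decomposed vectors under M
  have A1 : M.mulVec (s • w₁) = (ω ^ 2 * (a * ω)) • v₁ + (ω ^ 2 * (b * ω ^ 2)) • v₂ := by
    rw [Matrix.mulVec_smul, hMw₁, smul_comm s (ω ^ 2), ← Matrix.mulVec_smul, hGw₁,
      smul_add, smul_smul, smul_smul]
  have A2 : M.mulVec (s • w₂) = (ω * (c * ω)) • v₁ + (ω * (d * ω ^ 2)) • v₂ := by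
    rw [Matrix.mulVec_smul, hMw₂, smul_comm s ω, ← Matrix.mulVec_smul, hGw₂,
      smul_add, smul_smul, smul_smul]
  have tsp := trace_sp M (s • w₁) (s • w₂)
  rw [A1, A2, hdec₁, hdec₂, hsp_comb, hsp_comb, hsp_comb] at tsp
  -- master identity
  have key : M.trace * ((a * d + b * c) * s) = (b * c) * s := by
    have htwo : (2 : K) = 0 := CharTwo.two_eq_zero
    linear_combination tsp + (a * d * s * ω ^ 3 - b * c * s) * htwo + (b * c * s * ω) * hω3 +
      (b * c * s) * hω
  rcases htr with htr0 | htr1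
  · rw [htr0, zero_mul] at key
    have hbc : b * c = 0 := by
      rcases mul_eq_zero.1 key.symm with h1 | h1
      · exact h1
      · exact absurd h1 hv12
    rcases mul_eq_zero.1 hbc with h1 | h1
    · exact Or.inl h1
    · exact Or.inr (Or.inl (by rw [sp_comm]; exact h1))
  · rw [htr1, one_mul] at key
    have had : (a * d) * s = 0 := by linear_combination key
    have had' : a * d = 0 := by
      rcases mul_eq_zero.1 had with h1 | h1
      · exact h1
      · exact absurd h1 hv12
    rcases mul_eq_zero.1 had' with h1 | h1
    · exact Or.inr (Or.inr (Or.inl (by rw [sp_comm]; exact h1)))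
    · exact Or.inr (Or.inr (Or.inr h1))

end Helpers4
noncomputable section Helpers5
open Matrix Projectivization

variable {K : Type*} [Field K]

local notation "SL2" => Matrix.SpecialLinearGroup (Fin 2) K

lemma trace_mul_inv [CharP K 2] (m m' : SL2) :
    ((m * m'⁻¹ : SL2) : Matrix (Fin 2) (Fin 2) K).trace =
      (m : Matrix (Fin 2) (Fin 2) K) 0 0 * (m' : Matrix (Fin 2) (Fin 2) K) 1 1 +
      (m : Matrix (Fin 2) (Fin 2) K) 1 1 * (m' : Matrix (Fin 2) (Fin 2) K) 0 0 +
      ((m : Matrix (Fin 2) (Fin 2) K) 0 1 * (m' : Matrix (Fin 2) (Fin 2) K) 1 0 +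
       (m : Matrix (Fin 2) (Fin 2) K) 1 0 * (m' : Matrix (Fin 2) (Fin 2) K) 0 1) := by
  have htwo : (2 : K) = 0 := CharTwo.two_eq_zero
  rw [Matrix.SpecialLinearGroup.coe_mul, Matrix.SpecialLinearGroup.coe_inv,
    Matrix.adjugate_fin_two]
  simp only [Matrix.trace_fin_two, Matrix.mul_apply, Fin.sum_univ_two,
    Matrix.cons_val', Matrix.cons_val_zero, Matrix.cons_val_one, Matrix.head_cons,
    Matrix.empty_val', Matrix.cons_val_fin_one, Matrix.head_fin_const, Matrix.of_apply]
  linear_combination (-((m : Matrix (Fin 2) (Fin 2) K) 0 1 * (m' : Matrix (Fin 2) (Fin 2) K) 1 0) -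
    (m : Matrix (Fin 2) (Fin 2) K) 1 0 * (m' : Matrix (Fin 2) (Fin 2) K) 0 1) * htwo

/-- Bound for subsets of the plane with pairwise pairing in `{0,1}`. -/
lemma plane_bound [CharP K 2] [Finite K] (P : Set (Fin 2 → K))
    (hP : ∀ u ∈ P, ∀ v ∈ P, sp u v = 0 ∨ sp u v = 1) (h4 : 4 ≤ Nat.card K) :
    Nat.card P ≤ Nat.card K := by
  by_cases hall : ∀ u ∈ P, ∀ v ∈ P, sp u v = 0
  · by_cases hz : ∀ u ∈ P, u = 0
    · have h1 : Nat.card P ≤ 1 := by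
        rw [Nat.card_coe_set_eq]
        calc P.ncard ≤ ({0} : Set (Fin 2 → K)).ncard :=
              Set.ncard_le_ncard (fun u hu => hz u hu) (Set.finite_singleton _)
        _ = 1 := Set.ncard_singleton _
      omega
    · push_neg at hz
      obtain ⟨u₀, hu₀P, hu₀⟩ := hz
      have hlin : ∀ v : ↥P, ∃ c : K, (v : Fin 2 → K) = c • u₀ := fun v => by
        obtain ⟨c, hc⟩ := sp_parallel hu₀ (hall u₀ hu₀P v v.2)
        exact ⟨c, hc⟩
      choose f hf using hlin
      have hinj : Function.Injective f := by
        intro v v' hvv'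
        apply Subtype.ext
        rw [hf v, hf v', hvv']
      exact Nat.card_le_card_of_injective f hinj
  · push_neg at hall
    obtain ⟨u, hu, v, hv, hsuv⟩ := hall
    have hs1 : sp u v = 1 := (hP u hu v hv).resolve_left hsuv
    have hsub : P ⊆ {0, u, v, u + v} := by
      intro w hw
      have hdec := sp_dec u v w
      rw [hs1, one_smul] at hdec
      rcases hP w hw v hv with h1 | h1 <;> rcases hP u hu w hw with h2 | h2 <;>
        rw [h1, h2] at hdec
      · rw [hdec]; simp
      · rw [hdec]; simp
      · rw [hdec]; simp
      · rw [hdec]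
        right; right; right
        rw [one_smul, one_smul]
        rfl
    have hle : Nat.card P ≤ 4 := by
      rw [Nat.card_coe_set_eq]
      calc P.ncard ≤ ({0, u, v, u + v} : Set (Fin 2 → K)).ncard :=
            Set.ncard_le_ncard hsub (Set.toFinite _)
      _ ≤ ({u, v, u + v} : Set (Fin 2 → K)).ncard + 1 := Set.ncard_insert_le _ _
      _ ≤ (({v, u + v} : Set (Fin 2 → K)).ncard + 1) + 1 := by
            have := Set.ncard_insert_le u ({v, u + v} : Set (Fin 2 → K))
            omega
      _ ≤ ((({u + v} : Set (Fin 2 → K)).ncard + 1) + 1) + 1 := by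
            have := Set.ncard_insert_le v ({u + v} : Set (Fin 2 → K))
            omega
      _ ≤ 4 := by rw [Set.ncard_singleton]
    omega

/-- Any trace-0 clique in `SL(2,K)` has at most `|K|` elements. -/
lemma A_bound [CharP K 2] [Finite K] (S : Set (Matrix.SpecialLinearGroup (Fin 2) K))
    (h0 : ∀ m ∈ S, (m : Matrix (Fin 2) (Fin 2) K).trace = 0)
    (hp : ∀ m ∈ S, ∀ m' ∈ S, ((m * m'⁻¹ : SL2) : Matrix (Fin 2) (Fin 2) K).trace = 0 ∨
      ((m * m'⁻¹ : SL2) : Matrix (Fin 2) (Fin 2) K).trace = 1)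
    (h4 : 4 ≤ Nat.card K) : Nat.card S ≤ Nat.card K := by
  classical
  set e : Matrix.SpecialLinearGroup (Fin 2) K → (Fin 2 → K) :=
    fun m => ![(m : Matrix (Fin 2) (Fin 2) K) 0 1, (m : Matrix (Fin 2) (Fin 2) K) 1 0] with he
  have hdiag : ∀ m ∈ S, (m : Matrix (Fin 2) (Fin 2) K) 1 1 = (m : Matrix (Fin 2) (Fin 2) K) 0 0 := by
    intro m hm
    have := h0 m hm
    rw [Matrix.trace_fin_two] at this
    exact (eq_of_add_eq_zero_char2 this).symm
  have hinj : Set.InjOn e S := by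
    intro m hm m' hm' hee
    have h01 : (m : Matrix (Fin 2) (Fin 2) K) 0 1 = (m' : Matrix (Fin 2) (Fin 2) K) 0 1 := by
      simpa [he] using congrFun hee 0
    have h10 : (m : Matrix (Fin 2) (Fin 2) K) 1 0 = (m' : Matrix (Fin 2) (Fin 2) K) 1 0 := by
      simpa [he] using congrFun hee 1
    have hd := m.2
    have hd' := m'.2
    rw [Matrix.det_fin_two] at hd hd'
    rw [hdiag m hm] at hd
    rw [hdiag m' hm'] at hd'
    have h00 : (m : Matrix (Fin 2) (Fin 2) K) 0 0 = (m' : Matrix (Fin 2) (Fin 2) K) 0 0 := by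
      apply sq_eq_sq_char2
      rw [sq, sq]
      linear_combination hd - hd' + ((m : Matrix (Fin 2) (Fin 2) K) 1 0) * h01 +
        ((m' : Matrix (Fin 2) (Fin 2) K) 0 1) * h10
    apply Matrix.SpecialLinearGroup.ext
    intro i j
    fin_cases i <;> fin_cases j
    · exact h00
    · exact h01
    · exact h10
    · show (m : Matrix (Fin 2) (Fin 2) K) 1 1 = (m' : Matrix (Fin 2) (Fin 2) K) 1 1
      rw [hdiag m hm, hdiag m' hm', h00]
  have hcard : Nat.card S = Nat.card (e '' S) := by
    rw [Nat.card_coe_set_eq, Nat.card_coe_set_eq, Set.ncard_image_of_injOn hinj]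
  rw [hcard]
  apply plane_bound _ _ h4
  rintro _ ⟨m, hm, rfl⟩ _ ⟨m', hm', rfl⟩
  have hsp : sp (e m) (e m') = ((m * m'⁻¹ : SL2) : Matrix (Fin 2) (Fin 2) K).trace := by
    rw [trace_mul_inv]
    have h1 := hdiag m hm
    have h2 := hdiag m' hm'
    simp only [sp, he, Matrix.cons_val_zero, Matrix.cons_val_one, Matrix.head_cons]
    rw [h1, h2]
    ring_nf
    rw [show ((m : Matrix (Fin 2) (Fin 2) K) 0 0 * (m' : Matrix (Fin 2) (Fin 2) K) 0 0) * 2 = 0 by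
      rw [CharTwo.two_eq_zero (R := K), mul_zero]]
    ring
  rw [hsp]
  exact hp m hm m' hm'

end Helpers5
noncomputable section Helpers6
open Matrix Projectivization

variable {K : Type*} [Field K]

local notation "SL2" => Matrix.SpecialLinearGroup (Fin 2) K

/-- Counting lemma: a family of "ordered pairs" which is injective, has distinct entries, and is
pairwise intersecting, has at most `2n` members when every punctured ground set has at most `n`
elements. -/
lemma pair_count {α X : Type*} [Finite X] [Finite α] (P₁ P₂ : α → X)
    (hinj : ∀ a b, P₁ a = P₁ b → P₂ a = P₂ b → a = b)
    (hne : ∀ a, P₁ a ≠ P₂ a)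
    (hint : ∀ a b, P₁ a = P₁ b ∨ P₁ a = P₂ b ∨ P₂ a = P₁ b ∨ P₂ a = P₂ b)
    (n : ℕ) (h3 : 3 ≤ n) (hX : ∀ x : X, Nat.card {y : X // y ≠ x} ≤ n) :
    Nat.card α ≤ 2 * n := by
  classical
  rcases isEmpty_or_nonempty α with hα | hα
  · rw [Nat.card_of_isEmpty]
    omega
  obtain ⟨a₀⟩ := hα
  by_cases hstar : ∃ x : X, ∀ b, P₁ b = x ∨ P₂ b = x
  · obtain ⟨x, hx⟩ := hstar
    set f : α → Bool × {y : X // y ≠ x} := fun b =>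
      if h : P₁ b = x then (true, ⟨P₂ b, by rw [← h]; exact (hne b).symm⟩)
      else (false, ⟨P₁ b, h⟩) with hf
    have hfinj : Function.Injective f := by
      intro a b hab
      by_cases ha : P₁ a = x <;> by_cases hb : P₁ b = x <;>
        simp only [hf, ha, hb, dif_pos, dif_neg, not_false_iff, Prod.mk.injEq,
          Subtype.mk.injEq] at hab
      · exact hinj a b (ha.trans hb.symm) hab.2
      · exact absurd hab.1 (by simp)
      · exact absurd hab.1 (by simp)
      · have hP2a : P₂ a = x := (hx a).resolve_left ha
        have hP2b : P₂ b = x := (hx b).resolve_left hb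
        exact hinj a b hab.2 (hP2a.trans hP2b.symm)
    calc Nat.card α ≤ Nat.card (Bool × {y : X // y ≠ x}) :=
          Nat.card_le_card_of_injective f hfinj
    _ = 2 * Nat.card {y : X // y ≠ x} := by
          rw [Nat.card_prod, Nat.card_eq_fintype_card (α := Bool), Fintype.card_bool]
    _ ≤ 2 * n := by have := hX x; omega
  · push_neg at hstar
    set x := P₁ a₀ with hxdef
    set y := P₂ a₀ with hydef
    have hxy : x ≠ y := hne a₀
    obtain ⟨b₁, hb₁1, hb₁2⟩ := hstar x
    obtain ⟨b₂, hb₂1, hb₂2⟩ := hstar y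
    -- the pair of b₁ contains y
    have hmem₁ : P₁ b₁ = y ∨ P₂ b₁ = y := by
      rcases hint a₀ b₁ with h | h | h | h
      · exact absurd h.symm hb₁1
      · exact absurd h.symm hb₁2
      · exact Or.inl h.symm
      · exact Or.inr h.symm
    -- the other entry of b₁
    obtain ⟨z, hzx, hzy, hz₁⟩ : ∃ z, z ≠ x ∧ z ≠ y ∧
        ∀ u, (P₁ b₁ = u ∨ P₂ b₁ = u) ↔ (u = y ∨ u = z) := by
      rcases hmem₁ with h | h
      · refine ⟨P₂ b₁, fun hc => hb₁2 hc, fun hc => (hne b₁) (h.trans hc.symm), ?_⟩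
        intro u
        rw [h]
        constructor
        · rintro (rfl | rfl)
          · exact Or.inl rfl
          · exact Or.inr rfl
        · rintro (rfl | rfl)
          · exact Or.inl rfl
          · exact Or.inr rfl
      · refine ⟨P₁ b₁, fun hc => hb₁1 hc, fun hc => (hne b₁) (hc.trans h.symm), ?_⟩
        intro u
        rw [h]
        constructor
        · rintro (rfl | rfl)
          · exact Or.inr rfl
          · exact Or.inl rfl
        · rintro (rfl | rfl)
          · exact Or.inr rfl
          · exact Or.inl rfl
    -- the pair of b₂ contains x, and its other entry is z
    have hmem₂ : P₁ b₂ = x ∨ P₂ b₂ = x := by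
      rcases hint a₀ b₂ with h | h | h | h
      · exact Or.inl h.symm
      · exact Or.inr h.symm
      · exact absurd h.symm hb₂1
      · exact absurd h.symm hb₂2
    obtain ⟨z', hz'x, hz'y, hz₂⟩ : ∃ z', z' ≠ x ∧ z' ≠ y ∧
        ∀ u, (P₁ b₂ = u ∨ P₂ b₂ = u) ↔ (u = x ∨ u = z') := by
      rcases hmem₂ with h | h
      · refine ⟨P₂ b₂, fun hc => (hne b₂) (h.trans hc.symm), fun hc => hb₂2 hc, ?_⟩
        intro u
        rw [h]
        constructor
        · rintro (rfl | rfl)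
          · exact Or.inl rfl
          · exact Or.inr rfl
        · rintro (rfl | rfl)
          · exact Or.inl rfl
          · exact Or.inr rfl
      · refine ⟨P₁ b₂, fun hc => (hne b₂) (hc.trans h.symm), fun hc => hb₂1 hc, ?_⟩
        intro u
        rw [h]
        constructor
        · rintro (rfl | rfl)
          · exact Or.inr rfl
          · exact Or.inl rfl
        · rintro (rfl | rfl)
          · exact Or.inr rfl
          · exact Or.inl rfl
    have hzz' : z = z' := by
      -- b₁ and b₂ intersect
      have h12 : ∃ u, (P₁ b₁ = u ∨ P₂ b₁ = u) ∧ (P₁ b₂ = u ∨ P₂ b₂ = u) := by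
        rcases hint b₁ b₂ with h | h | h | h
        · exact ⟨P₁ b₂, Or.inl h, Or.inl rfl⟩
        · exact ⟨P₂ b₂, Or.inl h, Or.inr rfl⟩
        · exact ⟨P₁ b₂, Or.inr h, Or.inl rfl⟩
        · exact ⟨P₂ b₂, Or.inr h, Or.inr rfl⟩
      obtain ⟨u, hu1, hu2⟩ := h12
      rcases (hz₁ u).1 hu1 with h1 | h1
      · rw [h1] at hu2
        rcases (hz₂ y).1 hu2 with h | h
        · exact absurd h hxy.symm
        · exact absurd h.symm hz'y
      · rw [h1] at hu2
        rcases (hz₂ z).1 hu2 with h | h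
        · exact absurd h hzx
        · exact h
    subst hzz'
    have hyz : y ≠ z := fun hc => hzy hc.symm
    -- every pair is inside {x, y, z}
    have hall : ∀ b, (P₁ b = x ∨ P₁ b = y ∨ P₁ b = z) ∧ (P₂ b = x ∨ P₂ b = y ∨ P₂ b = z) := by
      intro b
      have hca : P₁ b = x ∨ P₁ b = y ∨ P₂ b = x ∨ P₂ b = y := by
        rcases hint b a₀ with h | h | h | h
        · exact Or.inl h
        · exact Or.inr (Or.inl h)
        · exact Or.inr (Or.inr (Or.inl h))
        · exact Or.inr (Or.inr (Or.inr h))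
      have hcb : (P₁ b = y ∨ P₁ b = z) ∨ (P₂ b = y ∨ P₂ b = z) := by
        rcases hint b b₁ with h | h | h | h
        · exact Or.inl ((hz₁ (P₁ b)).1 (Or.inl h.symm))
        · exact Or.inl ((hz₁ (P₁ b)).1 (Or.inr h.symm))
        · exact Or.inr ((hz₁ (P₂ b)).1 (Or.inl h.symm))
        · exact Or.inr ((hz₁ (P₂ b)).1 (Or.inr h.symm))
      have hcc : (P₁ b = x ∨ P₁ b = z) ∨ (P₂ b = x ∨ P₂ b = z) := by
        rcases hint b b₂ with h | h | h | h
        · exact Or.inl ((hz₂ (P₁ b)).1 (Or.inl h.symm))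
        · exact Or.inl ((hz₂ (P₁ b)).1 (Or.inr h.symm))
        · exact Or.inr ((hz₂ (P₂ b)).1 (Or.inl h.symm))
        · exact Or.inr ((hz₂ (P₂ b)).1 (Or.inr h.symm))
      constructor
      · -- P₁ b ∈ {x,y,z}
        by_contra hnc
        push_neg at hnc
        obtain ⟨hn1, hn2, hn3⟩ := hnc
        have e1 : P₂ b = x ∨ P₂ b = y := by
          rcases hca with h | h | h | h
          · exact absurd h hn1
          · exact absurd h hn2
          · exact Or.inl h
          · exact Or.inr h
        have e2 : P₂ b = y ∨ P₂ b = z := by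
          rcases hcb with (h | h) | h
          · exact absurd h hn2
          · exact absurd h hn3
          · exact h
        have e3 : P₂ b = x ∨ P₂ b = z := by
          rcases hcc with (h | h) | h
          · exact absurd h hn1
          · exact absurd h hn3
          · exact h
        rcases e1 with h | h
        · rcases e2 with h' | h'
          · exact hxy (h.symm.trans h')
          · exact hzx (h'.symm.trans h)
        · rcases e3 with h' | h'
          · exact hxy (h'.symm.trans h)
          · exact hzy (h'.symm.trans h)
      · by_contra hnc
        push_neg at hnc
        obtain ⟨hn1, hn2, hn3⟩ := hnc
        have e1 : P₁ b = x ∨ P₁ b = y := by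
          rcases hca with h | h | h | h
          · exact Or.inl h
          · exact Or.inr h
          · exact absurd h hn1
          · exact absurd h hn2
        have e2 : P₁ b = y ∨ P₁ b = z := by
          rcases hcb with h | (h | h)
          · exact h
          · exact absurd h hn2
          · exact absurd h hn3
        have e3 : P₁ b = x ∨ P₁ b = z := by
          rcases hcc with h | (h | h)
          · exact h
          · exact absurd h hn1
          · exact absurd h hn3
        rcases e1 with h | h
        · rcases e2 with h' | h'
          · exact hxy (h.symm.trans h')
          · exact hzx (h'.symm.trans h)
        · rcases e3 with h' | h'
          · exact hxy (h'.symm.trans h)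
          · exact hzy (h'.symm.trans h)
    -- index map into Fin 3
    set idx : X → Fin 3 := fun u => if u = x then 0 else if u = y then 1 else 2 with hidx
    have hix : idx x = 0 := by simp [hidx]
    have hiy : idx y = 1 := by simp [hidx, Ne.symm hxy]
    have hiz : idx z = 2 := by simp [hidx, hzx, hzy]
    have hidx_inj : ∀ u u', (u = x ∨ u = y ∨ u = z) → (u' = x ∨ u' = y ∨ u' = z) →
        idx u = idx u' → u = u' := by
      rintro u u' (rfl | rfl | rfl) (rfl | rfl | rfl) h <;>
        simp only [hix, hiy, hiz] at h <;> first | rfl | exact absurd h (by decide)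
    set g : α → {p : Fin 3 × Fin 3 // p.1 ≠ p.2} := fun b =>
      ⟨(idx (P₁ b), idx (P₂ b)), by
        intro hc
        exact hne b (hidx_inj _ _ (hall b).1 (hall b).2 hc)⟩ with hg
    have hginj : Function.Injective g := by
      intro a b hab
      simp only [hg, Subtype.mk.injEq, Prod.mk.injEq] at hab
      exact hinj a b (hidx_inj _ _ (hall a).1 (hall b).1 hab.1)
        (hidx_inj _ _ (hall a).2 (hall b).2 hab.2)
    calc Nat.card α ≤ Nat.card {p : Fin 3 × Fin 3 // p.1 ≠ p.2} :=
          Nat.card_le_card_of_injective g hginj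
    _ = 6 := by rw [Nat.card_eq_fintype_card]; decide
    _ ≤ 2 * n := by omega

lemma finite_proj [Finite K] : Finite (Proj K) :=
  Quotient.finite _

/-- The complement of a point of the projective line has at most `|K|` elements. -/
lemma proj_compl_card [CharP K 2] [Finite K] (x₀ : Proj K) :
    Nat.card {y : Proj K // y ≠ x₀} ≤ Nat.card K := by
  have hv₀ : x₀.rep ≠ 0 := x₀.rep_nonzero
  set v₀ := x₀.rep with hv₀def
  obtain ⟨w₀, hw₀, hspvw⟩ : ∃ w₀ : Fin 2 → K, w₀ ≠ 0 ∧ sp v₀ w₀ ≠ 0 := by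
    rcases (vec_ne_zero_iff v₀).1 hv₀ with h | h
    · refine ⟨![0, 1], ?_, ?_⟩
      · intro hc
        simpa using congrFun hc 1
      · simpa [sp] using h
    · refine ⟨![1, 0], ?_, ?_⟩
      · intro hc
        simpa using congrFun hc 0
      · simpa [sp] using h
  have hnz : ∀ c : K, c • v₀ + w₀ ≠ 0 := by
    intro c hc
    apply hspvw
    have : sp v₀ (c • v₀ + w₀) = sp v₀ w₀ := by
      rw [sp_add_right, sp_smul_right, sp_self, mul_zero, zero_add]
    rw [← this, hc]
    simp [sp]
  have hne : ∀ c : K, Projectivization.mk K (c • v₀ + w₀) (hnz c) ≠ x₀ := by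
    intro c hc
    rw [← Projectivization.mk_rep x₀] at hc
    rw [line_eq_iff] at hc
    apply hspvw
    rw [sp_add_left, sp_smul_left, sp_self, mul_zero, zero_add, sp_comm] at hc
    exact hc
  set f : K → {y : Proj K // y ≠ x₀} := fun c => ⟨Projectivization.mk K (c • v₀ + w₀) (hnz c), hne c⟩
    with hfdef
  have hsurj : Function.Surjective f := by
    rintro ⟨y, hy⟩
    have hu : y.rep ≠ 0 := y.rep_nonzero
    have hβ : sp v₀ y.rep ≠ 0 := by
      intro hc
      apply hy
      rw [← Projectivization.mk_rep y, ← Projectivization.mk_rep x₀, line_eq_iff, sp_comm]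
      exact hc
    refine ⟨sp y.rep w₀ / sp v₀ y.rep, ?_⟩
    apply Subtype.ext
    show Projectivization.mk K _ (hnz _) = y
    conv_rhs => rw [← Projectivization.mk_rep y]
    rw [line_eq_iff]
    rw [sp_add_left, sp_smul_left, div_mul_cancel₀ _ hβ, sp_comm w₀ y.rep]
    exact add_self_char2 _
  exact Nat.card_le_card_of_surjective f hsurj

end Helpers6
noncomputable section Helpers7
open Matrix Projectivization

variable {K : Type*} [Field K]

local notation "SL2" => Matrix.SpecialLinearGroup (Fin 2) K

/-- Any trace-1 clique in `SL(2,K)` has at most `2|K|` elements. -/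
lemma B_bound [CharP K 2] [Finite K] {ω : K} (hω : ω ^ 2 + ω + 1 = 0)
    (S : Set (Matrix.SpecialLinearGroup (Fin 2) K))
    (h1 : ∀ m ∈ S, (m : Matrix (Fin 2) (Fin 2) K).trace = 1)
    (hp : ∀ m ∈ S, ∀ m' ∈ S, ((m * m'⁻¹ : SL2) : Matrix (Fin 2) (Fin 2) K).trace = 0 ∨
      ((m * m'⁻¹ : SL2) : Matrix (Fin 2) (Fin 2) K).trace = 1)
    (h3 : 3 ≤ Nat.card K) : Nat.card S ≤ 2 * Nat.card K := by
  classical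
  haveI : Finite (Proj K) := finite_proj
  have hev : ∀ m : ↥S, ∃ v : Fin 2 → K, v ≠ 0 ∧
      ((m : SL2) : Matrix (Fin 2) (Fin 2) K).mulVec v = ω • v := by
    intro m
    obtain ⟨v, hv0, hv⟩ := eig_exists _ (m : SL2).2 (h1 m m.2) ω hω
    exact ⟨v, hv0, hv⟩
  have hew : ∀ m : ↥S, ∃ w : Fin 2 → K, w ≠ 0 ∧
      ((m : SL2) : Matrix (Fin 2) (Fin 2) K).mulVec w = ω ^ 2 • w := by
    intro m
    obtain ⟨w, hw0, hw⟩ := eig_exists _ (m : SL2).2 (h1 m m.2) (ω ^ 2) (omega_sq hω)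
    exact ⟨w, hw0, hw⟩
  choose v hv0 hv using hev
  choose w hw0 hw using hew
  have hωω : ω ≠ ω ^ 2 := by
    intro hc
    have h2 : (1 : K) = 0 := by
      have htwo : (2 : K) = 0 := CharTwo.two_eq_zero
      linear_combination hω - hc - ω^2 * htwo
    exact one_ne_zero h2
  have hind : ∀ m : ↥S, sp (v m) (w m) ≠ 0 := by
    intro m hc
    obtain ⟨c, hc'⟩ := sp_parallel (hv0 m) hc
    have hcne : c ≠ 0 := by
      rintro rfl
      rw [zero_smul] at hc'
      exact hw0 m hc'
    have h2 := hw m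
    rw [hc', Matrix.mulVec_smul, hv m, smul_smul, smul_smul] at h2
    -- (c * ω) • v m = (ω² * c) • v m
    obtain ⟨i, hi⟩ : ∃ i, v m i ≠ 0 := by
      rcases (vec_ne_zero_iff (v m)).1 (hv0 m) with h | h
      · exact ⟨0, h⟩
      · exact ⟨1, h⟩
    have h3' := congrFun h2 i
    simp only [Pi.smul_apply, smul_eq_mul] at h3'
    have h4 : c * ω = ω ^ 2 * c := mul_right_cancel₀ hi h3'
    apply hωω
    have := mul_left_cancel₀ hcne (by linear_combination h4 : c * ω = c * (ω ^ 2))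
    exact this
  set P₁ : ↥S → Proj K := fun m => Projectivization.mk K (v m) (hv0 m) with hP₁
  set P₂ : ↥S → Proj K := fun m => Projectivization.mk K (w m) (hw0 m) with hP₂
  have hinj : ∀ a b : ↥S, P₁ a = P₁ b → P₂ a = P₂ b → a = b := by
    intro a b hab1 hab2
    rw [hP₁] at hab1
    rw [hP₂] at hab2
    simp only at hab1 hab2
    rw [line_eq_iff] at hab1 hab2
    obtain ⟨c, hc⟩ := sp_parallel (hv0 a) hab1
    obtain ⟨d, hd⟩ := sp_parallel (hw0 a) hab2
    have hcne : c ≠ 0 := by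
      rintro rfl
      rw [zero_smul] at hc
      exact hv0 b hc
    have hdne : d ≠ 0 := by
      rintro rfl
      rw [zero_smul] at hd
      exact hw0 b hd
    -- b acts on v a by ω and on w a by ω²
    have hbv : ((b : SL2) : Matrix (Fin 2) (Fin 2) K).mulVec (v a) = ω • (v a) := by
      have h2 := hv b
      rw [hc, Matrix.mulVec_smul] at h2
      have h4 : c • (((b : SL2) : Matrix (Fin 2) (Fin 2) K).mulVec (v a)) = c • (ω • v a) := by
        rw [h2, smul_comm]
      exact smul_right_injective _ hcne h4
    have hbw : ((b : SL2) : Matrix (Fin 2) (Fin 2) K).mulVec (w a) = ω ^ 2 • (w a) := by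
      have h2 := hw b
      rw [hd, Matrix.mulVec_smul] at h2
      have h4 : d • (((b : SL2) : Matrix (Fin 2) (Fin 2) K).mulVec (w a)) = d • (ω ^ 2 • w a) := by
        rw [h2, smul_comm]
      exact smul_right_injective _ hdne h4
    -- the difference kills the basis
    have hzero : ((a : SL2) : Matrix (Fin 2) (Fin 2) K) + ((b : SL2) : Matrix (Fin 2) (Fin 2) K)
        = 0 := by
      apply agree_basis _ (hind a)
      · rw [Matrix.add_mulVec, hv a, hbv]
        funext i
        simp only [Pi.add_apply, Pi.smul_apply, smul_eq_mul, Pi.zero_apply]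
        exact add_self_char2 _
      · rw [Matrix.add_mulVec, hw a, hbw]
        funext i
        simp only [Pi.add_apply, Pi.smul_apply, smul_eq_mul, Pi.zero_apply]
        exact add_self_char2 _
    have : (a : SL2) = (b : SL2) := by
      apply Matrix.SpecialLinearGroup.ext
      intro i j
      have := congrFun (congrFun hzero i) j
      simp only [Matrix.add_apply, Matrix.zero_apply] at this
      exact eq_of_add_eq_zero_char2 this
    exact Subtype.ext this
  have hne : ∀ a : ↥S, P₁ a ≠ P₂ a := by
    intro a hc
    rw [hP₁, hP₂] at hc
    simp only at hc
    rw [line_eq_iff] at hc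
    exact hind a hc
  have hint : ∀ a b : ↥S, P₁ a = P₁ b ∨ P₁ a = P₂ b ∨ P₂ a = P₁ b ∨ P₂ a = P₂ b := by
    intro a b
    have hK3 := K3 hω (a : SL2) (b : SL2) (hv a) (hw a) (hv b) (hw b) (hind a) (hind b)
      (hp a a.2 b b.2)
    rcases hK3 with h | h | h | h
    · exact Or.inl ((line_eq_iff (hv0 a) (hv0 b)).2 h)
    · exact Or.inr (Or.inr (Or.inr ((line_eq_iff (hw0 a) (hw0 b)).2 h)))
    · exact Or.inr (Or.inr (Or.inl ((line_eq_iff (hw0 a) (hv0 b)).2 h)))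
    · exact Or.inr (Or.inl ((line_eq_iff (hv0 a) (hw0 b)).2 h))
  exact pair_count P₁ P₂ hinj hne hint (Nat.card K) h3 proj_compl_card

end Helpers7
noncomputable section Helpers8
open Matrix Projectivization

variable {K : Type*} [Field K]

local notation "SL2" => Matrix.SpecialLinearGroup (Fin 2) K

/-- Upper triangular elements with cube-root-of-unity diagonal square or cube to 1. -/
lemma tri23 [CharP K 2] (k : SL2) (h10 : (k : Matrix (Fin 2) (Fin 2) K) 1 0 = 0)
    (h00 : ((k : Matrix (Fin 2) (Fin 2) K) 0 0) ^ 3 = 1) : k * k = 1 ∨ k * k * k = 1 := by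
  have htwo : (2 : K) = 0 := CharTwo.two_eq_zero
  set u := (k : Matrix (Fin 2) (Fin 2) K) 0 0 with hu_def
  set b := (k : Matrix (Fin 2) (Fin 2) K) 0 1 with hb_def
  have hdet := k.2
  rw [Matrix.det_fin_two] at hdet
  have h11 : u * (k : Matrix (Fin 2) (Fin 2) K) 1 1 = 1 := by
    linear_combination hdet + b * h10
  have hu0 : u ≠ 0 := by
    rintro hc
    rw [hc, zero_mul] at h11
    exact zero_ne_one h11
  have h11' : (k : Matrix (Fin 2) (Fin 2) K) 1 1 = u ^ 2 := by
    apply mul_left_cancel₀ hu0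
    rw [h11]
    linear_combination -h00
  have hmat : (k : Matrix (Fin 2) (Fin 2) K) = !![u, b; 0, u ^ 2] := by
    ext i j
    fin_cases i <;> fin_cases j <;> simp [hu_def, hb_def]
    · exact h10
    · exact h11'
  by_cases hu : u = 1
  · left
    apply Subtype.ext
    show ((k * k : SL2) : Matrix (Fin 2) (Fin 2) K) = _
    rw [Matrix.SpecialLinearGroup.coe_mul, Matrix.SpecialLinearGroup.coe_one, hmat,
      Matrix.mul_fin_two]
    ext i j
    fin_cases i <;> fin_cases j <;> simp [Matrix.one_apply]
    · linear_combination (u + 1) * hu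
    · linear_combination (b + b * (u + 1)) * hu + b * htwo
    · linear_combination u * h00 + hu
  · right
    have hE : u ^ 2 + u + 1 = 0 := by
      have hfac : (u - 1) * (u ^ 2 + u + 1) = 0 := by linear_combination h00
      rcases mul_eq_zero.1 hfac with h | h
      · exact absurd (by linear_combination h) hu
      · exact h
    apply Subtype.ext
    show ((k * k * k : SL2) : Matrix (Fin 2) (Fin 2) K) = _
    rw [Matrix.SpecialLinearGroup.coe_mul, Matrix.SpecialLinearGroup.coe_mul,
      Matrix.SpecialLinearGroup.coe_one, hmat, Matrix.mul_fin_two, Matrix.mul_fin_two]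
    ext i j
    fin_cases i <;> fin_cases j <;> simp [Matrix.one_apply]
    · linear_combination h00
    · linear_combination (b * u ^ 2) * hE
    · linear_combination (u ^ 3 + 1) * h00

lemma three_points [CharP K 2] : ∃ x y z : Proj K, x ≠ y ∧ x ≠ z ∧ y ≠ z := by
  have h10 : (![1, 0] : Fin 2 → K) ≠ 0 := by intro hc; simpa using congrFun hc 0
  have h01 : (![0, 1] : Fin 2 → K) ≠ 0 := by intro hc; simpa using congrFun hc 1
  have h11 : (![1, 1] : Fin 2 → K) ≠ 0 := by intro hc; simpa using congrFun hc 0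
  refine ⟨Projectivization.mk K ![1, 0] h10, Projectivization.mk K ![0, 1] h01,
    Projectivization.mk K ![1, 1] h11, ?_, ?_, ?_⟩ <;>
  · intro hc
    rw [line_eq_iff] at hc
    simp [sp] at hc

set_option maxHeartbeats 1000000 in
/-- An element squaring or cubing to 1 stabilizes some 3-element subset of the projective
line (char 2). -/
lemma stabilizer3 [CharP K 2] (k : SL2) (hk : k * k = 1 ∨ k * k * k = 1) :
    ∃ S : Set (Proj K), S.ncard = 3 ∧ k • S = S := by
  obtain ⟨x, y, z, hxy, hxz, hyz⟩ := three_points (K := K)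
  by_cases hk1 : k = 1
  · exact ⟨{x, y, z}, Set.ncard_eq_three.2 ⟨x, y, z, hxy, hxz, hyz, rfl⟩, by
      rw [hk1, one_smul]⟩
  have hmove : ∃ p : Proj K, k • p ≠ p := by
    by_contra hc
    push_neg at hc
    exact hk1 (fix3 k hxy hxz hyz (hc x) (hc y) (hc z))
  obtain ⟨p, hp⟩ := hmove
  rcases hk with hk2 | hk3
  · -- involution case: find a fixed point
    have htr := trace_of_sq_eq_one k hk2
    rw [Matrix.trace_fin_two] at htr
    set M := (k : Matrix (Fin 2) (Fin 2) K) + 1 with hM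
    have hdetk := k.2
    rw [Matrix.det_fin_two] at hdetk
    have hdet : M.det = 0 := by
      rw [Matrix.det_fin_two]
      simp only [hM, Matrix.add_apply, Matrix.one_apply_eq, Matrix.one_apply_ne,
        Matrix.one_apply]
      have htwo : (2 : K) = 0 := CharTwo.two_eq_zero
      simp only [if_neg (by decide : ¬(0 : Fin 2) = 1), if_neg (by decide : ¬(1 : Fin 2) = 0),
        if_pos rfl, add_zero]
      linear_combination hdetk + htr + htwo
    have hM0 : M ≠ 0 := by
      intro hc
      apply hk1
      apply Matrix.SpecialLinearGroup.ext
      intro i j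
      have h2 := congrFun (congrFun hc i) j
      simp only [hM, Matrix.add_apply, Matrix.zero_apply] at h2
      rw [Matrix.SpecialLinearGroup.coe_one]
      exact eq_of_add_eq_zero_char2 h2
    obtain ⟨q, hq0, hq⟩ := ker_vec M hdet hM0
    have hkq : (k : Matrix (Fin 2) (Fin 2) K).mulVec q = q := by
      rw [hM, Matrix.add_mulVec, Matrix.one_mulVec] at hq
      funext i
      have h2 := congrFun hq i
      simp only [Pi.add_apply, Pi.zero_apply] at h2
      exact eq_of_add_eq_zero_char2 h2
    set Q := Projectivization.mk K q hq0 with hQ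
    have hfixQ : k • Q = Q := by
      rw [hQ, SL_smul_mk]
      exact (Projectivization.mk_eq_mk_iff K _ _ _ _).2 ⟨1, by rw [hkq, one_smul]⟩
    have hQp : Q ≠ p := fun hc => hp (by rw [← hc]; exact hfixQ)
    have hQkp : Q ≠ k • p := by
      intro hc
      have e1 : Q = p := by
        conv_lhs => rw [← hfixQ, hc]
        rw [← mul_smul, hk2, one_smul]
      rw [e1] at hc
      exact hp hc.symm
    have hpkp : p ≠ k • p := fun hc => hp hc.symm
    refine ⟨{Q, p, k • p}, Set.ncard_eq_three.2 ⟨Q, p, k • p, hQp, hQkp, hpkp, rfl⟩, ?_⟩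
    rw [Set.smul_set_insert, Set.smul_set_insert, Set.smul_set_singleton, hfixQ,
      ← mul_smul, hk2, one_smul]
    ext t
    simp only [Set.mem_insert_iff, Set.mem_singleton_iff]
    tauto
  · -- order 3 case: a free orbit
    have hp3 : (k * k * k) • p = p := by rw [hk3, one_smul]
    have h1 : p ≠ k • p := fun hc => hp hc.symm
    have h2 : p ≠ (k * k) • p := by
      intro hc
      apply hp
      have h3 := congrArg (fun t => k • t) hc
      beta_reduce at h3
      rw [← mul_smul, ← mul_assoc, hp3] at h3
      exact h3
    have h3 : k • p ≠ (k * k) • p := by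
      intro hc
      rw [mul_smul] at hc
      exact h1 (smul_left_cancel_iff k |>.1 hc)
    refine ⟨{p, k • p, (k * k) • p},
      Set.ncard_eq_three.2 ⟨p, k • p, (k * k) • p, h1, h2, h3, rfl⟩, ?_⟩
    rw [Set.smul_set_insert, Set.smul_set_insert, Set.smul_set_singleton,
      ← mul_smul, ← mul_smul, ← mul_assoc, hp3]
    ext t
    simp only [Set.mem_insert_iff, Set.mem_singleton_iff]
    tauto

end Helpers8
noncomputable section Helpers9
open Matrix Projectivization

variable {K : Type*} [Field K]

local notation "SL2" => Matrix.SpecialLinearGroup (Fin 2) K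

lemma omega_ne_sq [CharP K 2] {ω : K} (hω : ω ^ 2 + ω + 1 = 0) : ω ≠ ω ^ 2 := by
  intro hc
  have htwo : (2 : K) = 0 := CharTwo.two_eq_zero
  have h2 : (1 : K) = 0 := by linear_combination hω - hc - ω ^ 2 * htwo
  exact one_ne_zero h2

lemma cube_roots_card [CharP K 2] [Finite K] {ω : K} (hω : ω ^ 2 + ω + 1 = 0) :
    Nat.card {d : K // d ^ 3 = 1} = 3 := by
  have hω3 : ω ^ 3 = 1 := omega_cube hω
  have hωne1 : ω ≠ 1 := omega_ne_one hω
  have hroots : {d : K | d ^ 3 = 1} = {1, ω, ω ^ 2} := by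
    ext x
    simp only [Set.mem_setOf_eq, Set.mem_insert_iff, Set.mem_singleton_iff]
    constructor
    · intro hx
      have hfac : (x - 1) * ((x - ω) * (x - ω ^ 2)) = 0 := by
        linear_combination hx + (x - x ^ 2) * hω + (x - 1) * hω3
      rcases mul_eq_zero.1 hfac with h | h
      · exact Or.inl (by linear_combination h)
      · rcases mul_eq_zero.1 h with h' | h'
        · exact Or.inr (Or.inl (by linear_combination h'))
        · exact Or.inr (Or.inr (by linear_combination h'))
    · rintro (rfl | rfl | rfl)
      · exact one_pow 3
      · exact hω3
      · rw [show (ω ^ 2) ^ 3 = (ω ^ 3) ^ 2 by ring, hω3, one_pow]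
  have h1ω : (1 : K) ≠ ω := fun hc => hωne1 hc.symm
  have h1ω2 : (1 : K) ≠ ω ^ 2 := by
    intro hc
    exact hωne1 (sq_eq_sq_char2 (by rw [← hc]; ring)).symm
  have hωω2 : ω ≠ ω ^ 2 := omega_ne_sq hω
  have hcard3 : ({1, ω, ω ^ 2} : Set K).ncard = 3 :=
    Set.ncard_eq_three.2 ⟨1, ω, ω ^ 2, h1ω, h1ω2, hωω2, rfl⟩
  calc Nat.card {d : K // d ^ 3 = 1} = Nat.card {d : K | d ^ 3 = 1} := rfl
  _ = ({d : K | d ^ 3 = 1} : Set K).ncard := Nat.card_coe_set_eq _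
  _ = 3 := by rw [hroots, hcard3]

/-- An element of `SL(2,K)` which is upper triangular with `g₀₀³ = 1` has the explicit
form `!![u, b; 0, u²]`. -/
lemma tri_mat (g : Matrix.SpecialLinearGroup (Fin 2) K)
    (h10 : (g : Matrix (Fin 2) (Fin 2) K) 1 0 = 0)
    (h00 : ((g : Matrix (Fin 2) (Fin 2) K) 0 0) ^ 3 = 1) :
    (g : Matrix (Fin 2) (Fin 2) K) =
      !![(g : Matrix (Fin 2) (Fin 2) K) 0 0, (g : Matrix (Fin 2) (Fin 2) K) 0 1;
         0, ((g : Matrix (Fin 2) (Fin 2) K) 0 0) ^ 2] := by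
  have hdet := g.2
  rw [Matrix.det_fin_two] at hdet
  have h11 : (g : Matrix (Fin 2) (Fin 2) K) 0 0 * (g : Matrix (Fin 2) (Fin 2) K) 1 1 = 1 := by
    linear_combination hdet + (g : Matrix (Fin 2) (Fin 2) K) 0 1 * h10
  have hu0 : (g : Matrix (Fin 2) (Fin 2) K) 0 0 ≠ 0 := by
    rintro hc
    rw [hc, zero_mul] at h11
    exact zero_ne_one h11
  have h11' : (g : Matrix (Fin 2) (Fin 2) K) 1 1 = ((g : Matrix (Fin 2) (Fin 2) K) 0 0) ^ 2 := by
    apply mul_left_cancel₀ hu0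
    rw [h11]
    linear_combination -h00
  ext i j
  fin_cases i <;> fin_cases j <;> simp
  · exact h10
  · exact h11'

/-- The general theorem over any finite field of characteristic 2 containing a primitive cube
root of unity. -/
lemma main_general [Finite K] [CharP K 2] {ω : K}
    (hω : ω ^ 2 + ω + 1 = 0) (h4 : 4 ≤ Nat.card K) :
    IsGreatest {n : ℕ |
        ∃ F : Set (Matrix.SpecialLinearGroup (Fin 2) K),
          IntersectingOnSubsets _ K 3 F ∧ F.ncard = n}
      (3 * Nat.card K) := by
  classical
  have h3 : 3 ≤ Nat.card K := by omega
  constructor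
  · -- membership : lower bound construction
    set F : Set (Matrix.SpecialLinearGroup (Fin 2) K) :=
      {g | (g : Matrix (Fin 2) (Fin 2) K) 1 0 = 0 ∧
        ((g : Matrix (Fin 2) (Fin 2) K) 0 0) ^ 3 = 1} with hF
    refine ⟨F, ?_, ?_⟩
    · intro g hg h hh
      obtain ⟨hg1, hg2⟩ := hg
      obtain ⟨hh1, hh2⟩ := hh
      set k : Matrix.SpecialLinearGroup (Fin 2) K := h⁻¹ * g with hkdef
      have hdeth := h.2
      rw [Matrix.det_fin_two] at hdeth
      have hinv : ((h⁻¹ : SL2) : Matrix (Fin 2) (Fin 2) K) =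
          !![(h : Matrix (Fin 2) (Fin 2) K) 1 1, -(h : Matrix (Fin 2) (Fin 2) K) 0 1;
             -(h : Matrix (Fin 2) (Fin 2) K) 1 0, (h : Matrix (Fin 2) (Fin 2) K) 0 0] := by
        rw [Matrix.SpecialLinearGroup.coe_inv, Matrix.adjugate_fin_two]
      have hkco : (k : Matrix (Fin 2) (Fin 2) K) =
          ((h⁻¹ : SL2) : Matrix (Fin 2) (Fin 2) K) * (g : Matrix (Fin 2) (Fin 2) K) :=
        Matrix.SpecialLinearGroup.coe_mul h⁻¹ g
      have e10 : (k : Matrix (Fin 2) (Fin 2) K) 1 0 = 0 := by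
        rw [hkco, hinv, Matrix.mul_apply, Fin.sum_univ_two]
        simp [hg1, hh1]
      have e00 : (k : Matrix (Fin 2) (Fin 2) K) 0 0 =
          (h : Matrix (Fin 2) (Fin 2) K) 1 1 * (g : Matrix (Fin 2) (Fin 2) K) 0 0 := by
        rw [hkco, hinv, Matrix.mul_apply, Fin.sum_univ_two]
        simp [hg1]
      have e00c : ((k : Matrix (Fin 2) (Fin 2) K) 0 0) ^ 3 = 1 := by
        rw [e00, mul_pow, hg2, mul_one]
        have hmul : (h : Matrix (Fin 2) (Fin 2) K) 1 1 ^ 3 *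
            ((h : Matrix (Fin 2) (Fin 2) K) 0 0) ^ 3 = 1 := by
          rw [← mul_pow]
          rw [show (h : Matrix (Fin 2) (Fin 2) K) 1 1 * (h : Matrix (Fin 2) (Fin 2) K) 0 0 = 1 by
            linear_combination hdeth + (h : Matrix (Fin 2) (Fin 2) K) 0 1 * hh1]
          exact one_pow 3
        rw [hh2, mul_one] at hmul
        exact hmul
      obtain ⟨S, hS3, hSstab⟩ := stabilizer3 k (tri23 k e10 e00c)
      refine ⟨S, hS3, ?_⟩
      have hghk : g = h * k := by rw [hkdef]; group
      rw [hghk, mul_smul, hSstab]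
    · -- cardinality of F is 3 * |K|
      set φ : {d : K // d ^ 3 = 1} × K → ↥F := fun p =>
        ⟨⟨!![p.1.1, p.2; 0, p.1.1 ^ 2], by
            rw [Matrix.det_fin_two_of]
            linear_combination p.1.2⟩, by
          constructor
          · show !![p.1.1, p.2; 0, p.1.1 ^ 2] 1 0 = 0
            simp
          · show (!![p.1.1, p.2; 0, p.1.1 ^ 2] 0 0) ^ 3 = 1
            simp [p.1.2]⟩ with hφ
      have hbij : Function.Bijective φ := by
        constructor
        · rintro ⟨⟨d, hd⟩, c⟩ ⟨⟨d', hd'⟩, c'⟩ hcc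
          have h00 := congrFun (congrFun (congrArg (fun t => ((t : ↥F) : SL2).val) hcc) 0) 0
          have h01 := congrFun (congrFun (congrArg (fun t => ((t : ↥F) : SL2).val) hcc) 0) 1
          simp only [hφ] at h00 h01
          simp only [Matrix.cons_val', Matrix.cons_val_zero, Matrix.cons_val_one,
            Matrix.head_cons, Matrix.empty_val', Matrix.cons_val_fin_one, Matrix.of_apply] at h00 h01
          simp only [Prod.mk.injEq, Subtype.mk.injEq]
          exact ⟨h00, h01⟩
        · rintro ⟨g, hg1, hg2⟩
          refine ⟨⟨⟨(g : Matrix (Fin 2) (Fin 2) K) 0 0, hg2⟩,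
            (g : Matrix (Fin 2) (Fin 2) K) 0 1⟩, ?_⟩
          apply Subtype.ext
          apply Matrix.SpecialLinearGroup.ext
          intro i j
          show (!![(g : Matrix (Fin 2) (Fin 2) K) 0 0, (g : Matrix (Fin 2) (Fin 2) K) 0 1;
              0, ((g : Matrix (Fin 2) (Fin 2) K) 0 0) ^ 2] : Matrix (Fin 2) (Fin 2) K) i j =
            (g : Matrix (Fin 2) (Fin 2) K) i j
          conv_rhs => rw [tri_mat g hg1 hg2]
      have h1 : Nat.card ↥F = Nat.card ({d : K // d ^ 3 = 1} × K) :=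
        (Nat.card_eq_of_bijective φ hbij).symm
      rw [← Nat.card_coe_set_eq, h1, Nat.card_prod, cube_roots_card hω]
  · -- upper bound
    intro n hn
    obtain ⟨F, hFint, rfl⟩ := hn
    rcases Set.eq_empty_or_nonempty F with rfl | ⟨h₀, hh₀⟩
    · rw [Set.ncard_empty]
      exact Nat.zero_le _
    have hcond : ∀ g ∈ F, ∀ h ∈ F,
        ((g * h⁻¹ : SL2) : Matrix (Fin 2) (Fin 2) K).trace = 0 ∨
        ((g * h⁻¹ : SL2) : Matrix (Fin 2) (Fin 2) K).trace = 1 := by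
      intro g hg h hh
      obtain ⟨S, hS3, hgh⟩ := hFint g hg h hh
      have hstab : (h⁻¹ * g) • S = S := by
        rw [mul_smul, hgh, inv_smul_smul]
      have hconv : ((g * h⁻¹ : SL2) : Matrix (Fin 2) (Fin 2) K).trace =
          ((h⁻¹ * g : SL2) : Matrix (Fin 2) (Fin 2) K).trace := by
        rw [Matrix.SpecialLinearGroup.coe_mul, Matrix.SpecialLinearGroup.coe_mul,
          Matrix.trace_mul_comm]
      rcases perm3 (h⁻¹ * g) S hS3 hstab with h2 | h3'
      · exact Or.inl (by rw [hconv]; exact trace_of_sq_eq_one _ h2)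
      · rw [hconv]
        exact trace_of_cube_eq_one _ h3'
    set A := {g ∈ F | ((g * h₀⁻¹ : SL2) : Matrix (Fin 2) (Fin 2) K).trace = 0} with hA
    set B := {g ∈ F | ((g * h₀⁻¹ : SL2) : Matrix (Fin 2) (Fin 2) K).trace = 1} with hB
    have hsplit : F ⊆ A ∪ B := by
      intro g hg
      rcases hcond g hg h₀ hh₀ with h | h
      · exact Or.inl ⟨hg, h⟩
      · exact Or.inr ⟨hg, h⟩
    have hinj : Function.Injective (fun g : SL2 => g * h₀⁻¹) := fun a b hab => by
      simpa using congrArg (fun t => t * h₀) hab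
    have hAbound : A.ncard ≤ Nat.card K := by
      have h0' : ∀ m ∈ (fun g : SL2 => g * h₀⁻¹) '' A,
          (m : Matrix (Fin 2) (Fin 2) K).trace = 0 := by
        rintro m ⟨g, hg, rfl⟩
        exact hg.2
      have hp' : ∀ m ∈ (fun g : SL2 => g * h₀⁻¹) '' A, ∀ m' ∈ (fun g : SL2 => g * h₀⁻¹) '' A,
          ((m * m'⁻¹ : SL2) : Matrix (Fin 2) (Fin 2) K).trace = 0 ∨
          ((m * m'⁻¹ : SL2) : Matrix (Fin 2) (Fin 2) K).trace = 1 := by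
        rintro m ⟨g, hg, rfl⟩ m' ⟨g', hg', rfl⟩
        have heq : (g * h₀⁻¹) * (g' * h₀⁻¹)⁻¹ = g * g'⁻¹ := by group
        rw [heq]
        exact hcond g hg.1 g' hg'.1
      calc A.ncard = ((fun g : SL2 => g * h₀⁻¹) '' A).ncard :=
            (Set.ncard_image_of_injective A hinj).symm
      _ = Nat.card ↥((fun g : SL2 => g * h₀⁻¹) '' A) := (Nat.card_coe_set_eq _).symm
      _ ≤ Nat.card K := A_bound _ h0' hp' h4
    have hBbound : B.ncard ≤ 2 * Nat.card K := by
      have h0' : ∀ m ∈ (fun g : SL2 => g * h₀⁻¹) '' B,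
          (m : Matrix (Fin 2) (Fin 2) K).trace = 1 := by
        rintro m ⟨g, hg, rfl⟩
        exact hg.2
      have hp' : ∀ m ∈ (fun g : SL2 => g * h₀⁻¹) '' B, ∀ m' ∈ (fun g : SL2 => g * h₀⁻¹) '' B,
          ((m * m'⁻¹ : SL2) : Matrix (Fin 2) (Fin 2) K).trace = 0 ∨
          ((m * m'⁻¹ : SL2) : Matrix (Fin 2) (Fin 2) K).trace = 1 := by
        rintro m ⟨g, hg, rfl⟩ m' ⟨g', hg', rfl⟩
        have heq : (g * h₀⁻¹) * (g' * h₀⁻¹)⁻¹ = g * g'⁻¹ := by group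
        rw [heq]
        exact hcond g hg.1 g' hg'.1
      calc B.ncard = ((fun g : SL2 => g * h₀⁻¹) '' B).ncard :=
            (Set.ncard_image_of_injective B hinj).symm
      _ = Nat.card ↥((fun g : SL2 => g * h₀⁻¹) '' B) := (Nat.card_coe_set_eq _).symm
      _ ≤ 2 * Nat.card K := B_bound hω _ h0' hp' h3
    calc F.ncard ≤ (A ∪ B).ncard := Set.ncard_le_ncard hsplit (Set.toFinite _)
    _ ≤ A.ncard + B.ncard := Set.ncard_union_le _ _
    _ ≤ Nat.card K + 2 * Nat.card K := add_le_add hAbound hBbound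
    _ = 3 * Nat.card K := by ring

end Helpers9
/-- For `q = 2^(2ℓ)` with `ℓ ≥ 1`, the maximum size of an intersecting subset
of `SL(2, F_q) ≅ PGL(2, q)` for the action on 3-element subsets of the projective line is
exactly `3q`. -/
theorem max_intersecting_sl2_three_subsets_even_power_of_two (l : ℕ) (hl : 1 ≤ l) :
    IsGreatest {n : ℕ |
        ∃ F : Set (Matrix.SpecialLinearGroup (Fin 2) (GaloisField 2 (2 * l))),
          IntersectingOnSubsets _ (GaloisField 2 (2 * l)) 3 F ∧ F.ncard = n}
      (3 * 2 ^ (2 * l)) := by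
  classical
  haveI : Fact (Nat.Prime 2) := ⟨Nat.prime_two⟩
  have hcardK : Nat.card (GaloisField 2 (2 * l)) = 2 ^ (2 * l) :=
    GaloisField.card 2 (2 * l) (by omega)
  haveI hFin : Fintype (GaloisField 2 (2 * l)) := Fintype.ofFinite _
  have h3div : (3 : ℕ) ∣ Fintype.card (GaloisField 2 (2 * l))ˣ := by
    rw [Fintype.card_units]
    have hc : Fintype.card (GaloisField 2 (2 * l)) = 4 ^ l := by
      rw [← Nat.card_eq_fintype_card, hcardK, pow_mul]
      norm_num
    rw [hc]
    have h41 : 4 ^ l % 3 = 1 := by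
      rw [Nat.pow_mod]
      norm_num
    have h1le : 1 ≤ 4 ^ l := Nat.one_le_pow _ _ (by norm_num)
    omega
  haveI : Fact (Nat.Prime 3) := ⟨by norm_num⟩
  obtain ⟨ζ, hζ⟩ := exists_prime_orderOf_dvd_card (G := (GaloisField 2 (2 * l))ˣ) 3 h3div
  set ω : GaloisField 2 (2 * l) := ((ζ : (GaloisField 2 (2 * l))ˣ) : GaloisField 2 (2 * l)) with hωdef
  have hζ3 : ζ ^ 3 = 1 := by rw [← hζ]; exact pow_orderOf_eq_one ζ
  have hω3 : ω ^ 3 = 1 := by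
    rw [hωdef, ← Units.val_pow_eq_pow_val, hζ3, Units.val_one]
  have hωne1 : ω ≠ 1 := by
    intro hc
    have hζ1 : ζ = 1 := Units.ext (by rw [Units.val_one]; exact hc)
    rw [hζ1, orderOf_one] at hζ
    norm_num at hζ
  have hω : ω ^ 2 + ω + 1 = 0 := by
    have hfac : (ω - 1) * (ω ^ 2 + ω + 1) = 0 := by linear_combination hω3
    rcases mul_eq_zero.1 hfac with h | h
    · exact absurd (by linear_combination h) hωne1
    · exact h
  have h4 : 4 ≤ Nat.card (GaloisField 2 (2 * l)) := by
    rw [hcardK]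
    calc (4 : ℕ) = 2 ^ 2 := by norm_num
    _ ≤ 2 ^ (2 * l) := Nat.pow_le_pow_right (by norm_num) (by omega)
  have hmain := main_general (K := GaloisField 2 (2 * l)) hω h4
  rwa [hcardK] at hmain
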